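/- Let q be an odd prime power and a_1, …, a_{q-1} an enumeration of F_q^×. Then ∏_{1≤i<j≤q-1} (a_j - a_i)(a_j^{-1} - a_i^{-1}) = 1 in F_q. -/

import Mathlib

open Finset

lemma prod_erase_zero_eq_neg_one (F : Type*) [Field F] [Fintype F] [DecidableEq F] :
    ∏ x ∈ Finset.univ.erase (0 : F), x = -1 := by
  have h1 : (∏ u : Fˣ, (u : F)) = ∏ x ∈ Finset.univ.erase (0 : F), x := by
    refine Finset.prod_nbij' (Units.val)
      (fun x => if hx : x = 0 then 1 else Units.mk0 x hx) ?_ ?_ ?_ ?_ ?_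
    · intro u _
      simp [Finset.mem_erase, Units.ne_zero u]
    · intro x _; simp
    · intro u _
      simp [Units.ne_zero u, Units.ext_iff]
    · intro x hx
      simp only [Finset.mem_erase] at hx
      simp [hx.1]
    · intro u _; rfl
  rw [← h1]
  have h2 : (∏ u : Fˣ, u) = -1 := FiniteField.prod_univ_units_id_eq_neg_one
  calc (∏ u : Fˣ, (u : F)) = ((∏ u : Fˣ, u : Fˣ) : F) := by
        exact (map_prod (Units.coeHom F) (fun u => u) Finset.univ).symm
    _ = ((-1 : Fˣ) : F) := by rw [h2]
    _ = -1 := by simp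

lemma prod_one_sub_eq_neg_one (F : Type*) [Field F] [Fintype F] [DecidableEq F] :
    ∏ x ∈ (Finset.univ.erase (0 : F)).erase 1, (1 - x) = -1 := by
  have h1 : ∏ x ∈ (Finset.univ.erase (0 : F)).erase 1, (1 - x)
      = ∏ x ∈ (Finset.univ.erase (0 : F)).erase 1, x := by
    refine Finset.prod_nbij' (fun x => 1 - x) (fun x => 1 - x) ?_ ?_ ?_ ?_ ?_
    · intro x hx
      simp only [Finset.mem_erase, Finset.mem_univ, and_true] at hx ⊢
      constructor
      · intro h; apply hx.2; linear_combination -h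
      · intro h; apply hx.1; linear_combination -h
    · intro x hx
      simp only [Finset.mem_erase, Finset.mem_univ, and_true] at hx ⊢
      constructor
      · intro h; apply hx.2; linear_combination -h
      · intro h; apply hx.1; linear_combination -h
    · intro x _; ring
    · intro x _; ring
    · intro x _; rfl
  rw [h1]
  rw [Finset.prod_erase (f := fun x : F => x) (Finset.univ.erase (0 : F)) rfl]
  exact prod_erase_zero_eq_neg_one F

theorem stmt12 (F : Type*) [Field F] [Fintype F] (q : ℕ)
    (hq : Fintype.card F = q) (hodd : Odd q) (a : Fin (q - 1) ≃ Fˣ) :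
    (∏ s ∈ Finset.univ.filter (fun s : Fin (q - 1) × Fin (q - 1) => s.1 < s.2),
        (((a s.2 : F) - (a s.1 : F)) * ((a s.2 : F)⁻¹ - (a s.1 : F)⁻¹))) = 1 := by
  classical
  set g : Fin (q - 1) → Fin (q - 1) → F := fun i j => 1 - (a i : F) * (a j : F)⁻¹ with hg
  have key : ∀ i j : Fin (q - 1),
      ((a j : F) - (a i : F)) * ((a j : F)⁻¹ - (a i : F)⁻¹) = g i j * g j i := by
    intro i j
    have hi : (a i : F) ≠ 0 := Units.ne_zero _
    have hj : (a j : F) ≠ 0 := Units.ne_zero _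
    simp only [hg]
    field_simp
  simp only [key]
  rw [Finset.prod_mul_distrib]
  have hswap : (∏ s ∈ Finset.univ.filter (fun s : Fin (q-1) × Fin (q-1) => s.1 < s.2),
      g s.2 s.1)
      = ∏ s ∈ Finset.univ.filter (fun s : Fin (q-1) × Fin (q-1) => s.2 < s.1), g s.1 s.2 := by
    refine Finset.prod_nbij' Prod.swap Prod.swap ?_ ?_ ?_ ?_ ?_ <;> simp
  rw [hswap, ← Finset.prod_union]
  · have hset : (Finset.univ.filter (fun s : Fin (q-1) × Fin (q-1) => s.1 < s.2)) ∪
        (Finset.univ.filter (fun s : Fin (q-1) × Fin (q-1) => s.2 < s.1))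
        = Finset.univ.filter (fun s : Fin (q-1) × Fin (q-1) => s.1 ≠ s.2) := by
      rw [← Finset.filter_or]
      apply Finset.filter_congr
      intro s _
      simp [lt_or_lt_iff_ne]
    rw [hset]
    have hprod : (∏ s ∈ Finset.univ.filter (fun s : Fin (q-1) × Fin (q-1) => s.1 ≠ s.2),
        g s.1 s.2) = ∏ j : Fin (q-1), ∏ i ∈ Finset.univ.erase j, g i j := by
      rw [Finset.prod_filter]
      rw [← Finset.univ_product_univ, Finset.prod_product_right]
      refine Finset.prod_congr rfl fun j _ => ?_
      rw [← Finset.prod_filter]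
      congr 1
      ext i
      simp [Finset.mem_erase]
    rw [hprod]
    have hinner : ∀ j : Fin (q-1), (∏ i ∈ Finset.univ.erase j, g i j) = -1 := by
      intro j
      have hbij : (∏ i ∈ Finset.univ.erase j, g i j)
          = ∏ x ∈ (Finset.univ.erase (0 : F)).erase 1, (1 - x) := by
        refine Finset.prod_nbij' (fun i => (a i : F) * (a j : F)⁻¹)
          (fun x => if hx : x = 0 then j else a.symm (Units.mk0 x hx * a j)) ?_ ?_ ?_ ?_ ?_
        · intro i hi
          simp only [Finset.mem_erase, Finset.mem_univ, and_true] at hi ⊢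
          refine ⟨?_, ?_⟩
          · intro h
            rw [mul_inv_eq_one₀ (Units.ne_zero (a j))] at h
            exact hi (a.injective (Units.ext h))
          · exact mul_ne_zero (Units.ne_zero _) (inv_ne_zero (Units.ne_zero _))
        · intro x hx
          simp only [Finset.mem_erase, Finset.mem_univ, and_true] at hx ⊢
          rw [dif_neg hx.2]
          intro h
          have : Units.mk0 x hx.2 * a j = a j := by
            have := congrArg a h
            rwa [a.apply_symm_apply] at this
          have : Units.mk0 x hx.2 = 1 := by
            rw [mul_eq_right] at this
            exact this
          apply hx.1
          have := congrArg Units.val this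
          simpa using this
        · intro i hi
          simp only [Finset.mem_erase, Finset.mem_univ, and_true] at hi
          have hne : (a i : F) * (a j : F)⁻¹ ≠ 0 :=
            mul_ne_zero (Units.ne_zero _) (inv_ne_zero (Units.ne_zero _))
          rw [dif_neg hne]
          have : Units.mk0 ((a i : F) * (a j : F)⁻¹) hne = a i * (a j)⁻¹ := by
            ext
            simp
          rw [this]
          rw [inv_mul_cancel_right]
          exact a.symm_apply_apply i
        · intro x hx
          simp only [Finset.mem_erase, Finset.mem_univ, and_true] at hx
          rw [dif_neg hx.2]
          rw [a.apply_symm_apply]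
          simp
        · intro i _; rfl
      rw [hbij, prod_one_sub_eq_neg_one]
    simp only [hinner]
    rw [Finset.prod_const]
    have hq1 : Even (q - 1) := Nat.Odd.sub_odd hodd odd_one
    simp [Finset.card_univ, hq1.neg_one_pow]
  · rw [Finset.disjoint_filter]
    intro s _ h1
    simp only [not_lt]
    exact le_of_lt h1
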